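/- Let p be a prime number and let A be a commutative ring which is an algebra over ℤ/p²ℤ (so p²·1 = 0 in A). Let I ⊆ A be an ideal equipped with a divided power structure γ (with n-th divided power operation γ_n). Then for every x ∈ A and every ξ ∈ I, the element (x + ξ)^p − x^p + p·γ_p(ξ) lies in the submodule p·I = { p·y : y ∈ I } of A. -/

import Mathlib

/-- Let `p` be a prime and let `A` be a commutative ring which is an algebra over `ℤ/p²ℤ`.
Let `I ⊆ A` be an ideal with a divided power structure `γ`.  Then for every `x ∈ A` and
`ξ ∈ I`, the element `(x + ξ)^p - x^p + p·γ_p(ξ)` lies in `p·I = {p·y : y ∈ I}`. -/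
theorem pow_p_add_sub_mem_p_smul_of_dividedPowers
    (p : ℕ) (hp : p.Prime) (A : Type*) [CommRing A] [Algebra (ZMod (p ^ 2)) A]
    (I : Ideal A) (γ : DividedPowers I) (x ξ : A) (hξ : ξ ∈ I) :
    ∃ y ∈ I, (x + ξ) ^ p - x ^ p + p * γ.dpow p ξ = p * y := by
  haveI : Fact p.Prime := ⟨hp⟩
  have hp0 : 0 < p := hp.pos
  -- p² = 0 in A
  have hpsq : ((p : A)) ^ 2 = 0 := by
    have h1 : ((p ^ 2 : ℕ) : ZMod (p ^ 2)) = 0 := ZMod.natCast_self _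
    have h2 : ((p ^ 2 : ℕ) : A) = algebraMap (ZMod (p ^ 2)) A ((p ^ 2 : ℕ) : ZMod (p ^ 2)) :=
      (map_natCast _ _).symm
    rw [h1, map_zero] at h2
    push_cast at h2
    exact h2
  -- Wilson: p ∣ (p-1)! + 1
  obtain ⟨m, hm⟩ : p ∣ (p - 1).factorial + 1 := by
    have := ZMod.wilsons_lemma (p := p)
    have : (((p - 1).factorial + 1 : ℕ) : ZMod p) = 0 := by push_cast [this]; ring
    exact (ZMod.natCast_eq_zero_iff _ _).mp this
  have hfac : p.factorial + p = p ^ 2 * m := by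
    have h1 : p * (p - 1).factorial = p.factorial := Nat.mul_factorial_pred hp0.ne'
    calc p.factorial + p = p * ((p - 1).factorial + 1) := by
          rw [Nat.mul_add, Nat.mul_one, h1]
      _ = p ^ 2 * m := by rw [hm]; ring
  -- binomial expansion
  set y : A := ∑ k ∈ Finset.Ioo 0 p, x ^ k * ξ ^ (p - k) * ((p.choose k / p : ℕ) : A) with hy
  have hyI : y ∈ I := Ideal.sum_mem _ fun k hk => by
    obtain ⟨hk0, hkp⟩ := Finset.mem_Ioo.mp hk
    exact I.mul_mem_right _ (I.mul_mem_left _ (I.pow_mem_of_mem hξ _ (by omega)))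
  have hsum : ∑ k ∈ Finset.Ioo 0 p, x ^ k * ξ ^ (p - k) * ((p.choose k : ℕ) : A)
      = (p : A) * y := by
    rw [hy, Finset.mul_sum]
    apply Finset.sum_congr rfl
    intro k hk
    obtain ⟨hk0, hkp⟩ := Finset.mem_Ioo.mp hk
    have hdvd : p ∣ p.choose k := hp.dvd_choose_self (by omega) hkp
    have : ((p.choose k : ℕ) : A) = (p : A) * ((p.choose k / p : ℕ) : A) := by
      rw [← Nat.cast_mul, Nat.mul_div_cancel' hdvd]
    rw [this]; ring
  have hexp : (x + ξ) ^ p = x ^ p + ξ ^ p + p * y := by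
    rw [add_pow]
    have hset : Finset.range (p + 1) = insert p (insert 0 (Finset.Ioo 0 p)) := by
      ext k; simp [Finset.mem_range, Nat.lt_succ_iff]; omega
    rw [hset, Finset.sum_insert (by simp; omega), Finset.sum_insert (by simp), hsum]
    simp only [Nat.sub_self, pow_zero, Nat.choose_self, Nat.cast_one, mul_one, Nat.sub_zero,
      Nat.choose_zero_right, pow_zero, one_mul]
    ring
  have hxp : ξ ^ p = (p.factorial : A) * γ.dpow p ξ := (γ.factorial_mul_dpow_eq_pow (n := p) hξ).symm
  refine ⟨y, hyI, ?_⟩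
  have hz : ((p.factorial : ℕ) : A) + (p : A) = 0 := by
    have h3 : (((p.factorial + p : ℕ)) : A) = ((p ^ 2 * m : ℕ) : A) := by rw [hfac]
    push_cast at h3
    rw [hpsq, zero_mul] at h3
    exact h3
  rw [hexp, hxp]
  linear_combination γ.dpow p ξ * hz
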